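/- Let G be a residually finite group and φ an injective endomorphism of G that extends to a continuous automorphism φ̄ of a profinite group Ḡ containing G as a dense subgroup. Then the natural homomorphism θ : HNN_φ(G) → Ḡ ⋊ ⟨φ̄⟩ sending G identically to G and the stable letter t to φ̄ is injective. -/

import Mathlib

/-- The relations of the ascending HNN extension (mapping torus) of an endomorphism `φ`
of a group `G`: the multiplication table of `G` together with `t g t⁻¹ = φ g`. -/
def hnnRel {G : Type} [Group G] (φ : G →* G) : Set (FreeGroup (G ⊕ Unit)) :=
  { r | (∃ g h : G, r = FreeGroup.of (Sum.inl g) * FreeGroup.of (Sum.inl h) *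
            (FreeGroup.of (Sum.inl (g * h)))⁻¹) ∨
        (∃ g : G, r = FreeGroup.of (Sum.inr ()) * FreeGroup.of (Sum.inl g) *
            (FreeGroup.of (Sum.inr ()))⁻¹ * (FreeGroup.of (Sum.inl (φ g)))⁻¹) }

/-- The ascending HNN extension `HNN_φ(G)`. -/
def HNNExt {G : Type} [Group G] (φ : G →* G) : Type := PresentedGroup (hnnRel φ)

instance {G : Type} [Group G] (φ : G →* G) : Group (HNNExt φ) := by
  unfold HNNExt; infer_instance

/-- The image of `g ∈ G` in the HNN extension. -/
def hnnBase {G : Type} [Group G] (φ : G →* G) (g : G) : HNNExt φ :=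
  PresentedGroup.of (Sum.inl g)

/-- The stable letter `t` of the HNN extension. -/
def hnnT {G : Type} [Group G] (φ : G →* G) : HNNExt φ :=
  PresentedGroup.of (Sum.inr ())

def ResiduallyFinite (T : Type) [Group T] : Prop :=
  ∀ x : T, x ≠ 1 → ∃ (H : Type) (_ : Group H) (_ : Finite H) (ψ : T →* H), ψ x ≠ 1

section Aux

variable {G : Type} [Group G] (φ : G →* G)

lemma hnn_rel_one {r : FreeGroup (G ⊕ Unit)} (hr : r ∈ hnnRel φ) :
    PresentedGroup.mk (hnnRel φ) r = 1 :=
  (QuotientGroup.eq_one_iff _).mpr (Subgroup.subset_normalClosure hr)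

lemma hnnBase_mul (g h : G) : hnnBase φ g * hnnBase φ h = hnnBase φ (g * h) := by
  have h1 := hnn_rel_one φ (Or.inl ⟨g, h, rfl⟩)
  simp only [map_mul, map_inv] at h1
  exact mul_inv_eq_one.mp h1

lemma hnnBase_one : hnnBase φ (1 : G) = 1 := by
  have := hnnBase_mul φ 1 1
  rw [mul_one] at this
  exact (mul_eq_left.mp this)

lemma hnnBase_inv (g : G) : (hnnBase φ g)⁻¹ = hnnBase φ g⁻¹ := by
  rw [eq_comm, eq_inv_iff_mul_eq_one, hnnBase_mul, inv_mul_cancel, hnnBase_one]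

lemma hnnT_conj (g : G) : hnnT φ * hnnBase φ g = hnnBase φ (φ g) * hnnT φ := by
  have h1 := hnn_rel_one φ (Or.inr ⟨g, rfl⟩)
  simp only [map_mul, map_inv] at h1
  rw [mul_inv_eq_one] at h1
  have h2 : hnnT φ * hnnBase φ g * (hnnT φ)⁻¹ = hnnBase φ (φ g) := h1
  calc hnnT φ * hnnBase φ g
      = (hnnT φ * hnnBase φ g * (hnnT φ)⁻¹) * hnnT φ := by group
    _ = hnnBase φ (φ g) * hnnT φ := by rw [h2]

lemma hnnT_pow_conj (k : ℕ) (g : G) :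
    (hnnT φ)^k * hnnBase φ g = hnnBase φ (φ^[k] g) * (hnnT φ)^k := by
  induction k with
  | zero => simp
  | succ n ih =>
    rw [pow_succ', mul_assoc, ih, ← mul_assoc, hnnT_conj, Function.iterate_succ_apply',
      mul_assoc, ← pow_succ']

lemma hnnBase_mul_inv_pow (k : ℕ) (g : G) :
    hnnBase φ g * ((hnnT φ)^k)⁻¹ = ((hnnT φ)^k)⁻¹ * hnnBase φ (φ^[k] g) := by
  have h := hnnT_pow_conj φ k g
  calc hnnBase φ g * ((hnnT φ)^k)⁻¹
      = ((hnnT φ)^k)⁻¹ * ((hnnT φ)^k * hnnBase φ g) * ((hnnT φ)^k)⁻¹ := by group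
    _ = ((hnnT φ)^k)⁻¹ * (hnnBase φ (φ^[k] g) * (hnnT φ)^k) * ((hnnT φ)^k)⁻¹ := by rw [h]
    _ = ((hnnT φ)^k)⁻¹ * hnnBase φ (φ^[k] g) := by group

lemma hnn_normal_form (x : HNNExt φ) :
    ∃ (a b : ℕ) (w : G), x = ((hnnT φ)^a)⁻¹ * hnnBase φ w * (hnnT φ)^b := by
  induction x using PresentedGroup.induction_on with
  | H z =>
  induction z using FreeGroup.induction_on with
  | C1 => exact ⟨0, 0, 1, by simp [hnnBase_one]; rfl⟩
  | of s =>
    rcases s with g | u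
    · exact ⟨0, 0, g, by simp; rfl⟩
    · exact ⟨0, 1, 1, by simp [hnnBase_one]; rfl⟩
  | inv_of s _ =>
    rcases s with g | u
    · refine ⟨0, 0, g⁻¹, ?_⟩
      simp only [pow_zero, inv_one, one_mul, mul_one, map_inv]
      rw [← hnnBase_inv]; rfl
    · refine ⟨1, 0, 1, ?_⟩
      simp only [pow_one, pow_zero, mul_one, hnnBase_one, map_inv]
      rfl
  | mul x y hx hy =>
    obtain ⟨a, b, w, hw⟩ := hx
    obtain ⟨c, d, v, hv⟩ := hy
    rw [map_mul, hw, hv]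
    rcases le_total c b with hcb | hbc
    · obtain ⟨e, rfl⟩ : ∃ e, b = e + c := ⟨b - c, (Nat.sub_add_cancel hcb).symm⟩
      refine ⟨a, e + d, w * φ^[e] v, ?_⟩
      calc ((hnnT φ)^a)⁻¹ * hnnBase φ w * (hnnT φ)^(e+c) *
            (((hnnT φ)^c)⁻¹ * hnnBase φ v * (hnnT φ)^d)
          = ((hnnT φ)^a)⁻¹ * hnnBase φ w *
            ((hnnT φ)^e * hnnBase φ v) * (hnnT φ)^d := by
            rw [pow_add]; group
        _ = ((hnnT φ)^a)⁻¹ * hnnBase φ w *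
            (hnnBase φ (φ^[e] v) * (hnnT φ)^e) * (hnnT φ)^d := by
            rw [hnnT_pow_conj]
        _ = ((hnnT φ)^a)⁻¹ * hnnBase φ (w * φ^[e] v) * (hnnT φ)^(e+d) := by
            rw [← hnnBase_mul, pow_add]; group
    · obtain ⟨e, rfl⟩ : ∃ e, c = e + b := ⟨c - b, (Nat.sub_add_cancel hbc).symm⟩
      refine ⟨e + a, d, φ^[e] w * v, ?_⟩
      calc ((hnnT φ)^a)⁻¹ * hnnBase φ w * (hnnT φ)^b *
            (((hnnT φ)^(e+b))⁻¹ * hnnBase φ v * (hnnT φ)^d)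
          = ((hnnT φ)^a)⁻¹ * (hnnBase φ w * ((hnnT φ)^e)⁻¹) *
            (hnnBase φ v * (hnnT φ)^d) := by
            rw [pow_add]; group
        _ = ((hnnT φ)^a)⁻¹ * (((hnnT φ)^e)⁻¹ * hnnBase φ (φ^[e] w)) *
            (hnnBase φ v * (hnnT φ)^d) := by
            rw [hnnBase_mul_inv_pow]
        _ = ((hnnT φ)^(e+a))⁻¹ * hnnBase φ (φ^[e] w * v) * (hnnT φ)^d := by
            rw [← hnnBase_mul, pow_add]; group

end Aux

/-- If an injective endomorphism `φ` of a residually finite group `G` extends to a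
continuous automorphism `φbar` of a profinite group `Gbar ⊇ G` (dense), then the natural
homomorphism `HNN_φ(G) → Gbar ⋊ ⟨φbar⟩` (identical on `G`, sending `t` to `φbar`)
is injective. -/
theorem hnn_to_semidirect_injective {G : Type} [Group G]
    (hG : ResiduallyFinite G) (φ : G →* G) (hφ : Function.Injective φ)
    (Gbar : Type) [Group Gbar] [TopologicalSpace Gbar] [IsTopologicalGroup Gbar]
    [CompactSpace Gbar] [T2Space Gbar] [TotallyDisconnectedSpace Gbar]
    (ι : G →* Gbar) (hι : Function.Injective ι) (hdense : DenseRange ι)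
    (φbar : MulAut Gbar) (hcont : Continuous φbar) (hcont' : Continuous φbar.symm)
    (hext : ∀ g : G, φbar (ι g) = ι (φ g))
    (θ : HNNExt φ →* SemidirectProduct Gbar (Multiplicative ℤ)
      (zpowersHom (MulAut Gbar) φbar))
    (hθbase : ∀ g : G, θ (hnnBase φ g) = SemidirectProduct.inl (ι g))
    (hθt : θ (hnnT φ) = SemidirectProduct.inr (Multiplicative.ofAdd 1)) :
    Function.Injective θ := by
  rw [injective_iff_map_eq_one]
  intro x hx
  obtain ⟨a, b, w, rfl⟩ := hnn_normal_form φ x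
  rw [map_mul, map_mul, map_inv, map_pow, map_pow, hθt, hθbase w] at hx
  set A : SemidirectProduct Gbar (Multiplicative ℤ) (zpowersHom (MulAut Gbar) φbar) :=
    SemidirectProduct.inr (Multiplicative.ofAdd 1) with hA
  have hright := congrArg SemidirectProduct.rightHom hx
  simp only [map_mul, map_inv, map_pow, SemidirectProduct.rightHom_inl,
    SemidirectProduct.rightHom_inr, map_one, one_mul, mul_one, hA] at hright
  have hab : a = b := by
    have := congrArg Multiplicative.toAdd hright
    simp at this
    omega
  subst hab
  have hX : SemidirectProduct.inl (ι w) =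
      (1 : SemidirectProduct Gbar (Multiplicative ℤ) (zpowersHom (MulAut Gbar) φbar)) := by
    have h2 : SemidirectProduct.inl (ι w) =
        A ^ a * ((A ^ a)⁻¹ * SemidirectProduct.inl (ι w) * A ^ a) * (A ^ a)⁻¹ := by group
    rw [hx] at h2
    simpa using h2
  have hw : w = 1 := by
    apply hι
    rw [map_one]
    exact SemidirectProduct.inl_injective (by simpa using hX)
  rw [hw, hnnBase_one]
  group
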